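/- Let k be a field, let (F, G, ◁, ▷) be a matched pair of groups with G finite, let σ : G × F × F → kˣ be a normalized cocycle and τ : G × G × F → kˣ a normalized co-cocycle satisfying the compatibility condition. Let A be the crossed product algebra with k-basis {p_g # f | g ∈ G, f ∈ F}, multiplication (p_g # f)(p_{g'} # f') = δ_{g ◁ f, g'} σ(g; f, f') (p_g # f f') and unit Σ_{g ∈ G} p_g # 1_F. Define the k-linear map S : A → A on basis elements by S(p_g # f) = σ(g⁻¹; g ▷ f, (g ▷ f)⁻¹)⁻¹ τ(g⁻¹, g; f)⁻¹ (p_{(g ◁ f)⁻¹} # (g ▷ f)⁻¹). Then for all g ∈ G and f ∈ F one has Σ_{x ∈ G} τ(g x⁻¹, x; f) · S(p_{g x⁻¹} # (x ▷ f)) · (p_x # f) = δ_{g, 1_G} Σ_{y ∈ G} p_y # 1_F in A (i.e. the antipode axiom m(S ⊗ id)Δ = uε holds for the crossed coproduct Δ(p_g # f) = Σ_{x ∈ G} τ(g x⁻¹, x; f)(p_{g x⁻¹} # (x ▷ f)) ⊗ (p_x # f) and counit ε(p_g # f) = δ_{g, 1_G}). -/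

import Mathlib

/-- The crossed product multiplication on the free `k`-module with basis
`{p_g # f | g ∈ G, f ∈ F}` (realized as finitely supported functions on `G × F`):
`(p_g # f)(p_{g'} # f') = δ_{g ◁ f, g'} σ(g; f, f') (p_g # f f')`. -/
noncomputable def cpMul {k F G : Type*} [Field k] [Group F] [Group G] [DecidableEq G]
    (coa : G → F → G) (σ : G → F → F → kˣ)
    (a b : (G × F) →₀ k) : (G × F) →₀ k :=
  a.sum fun p c => b.sum fun q d =>
    if coa p.1 p.2 = q.1 then
      Finsupp.single (p.1, p.2 * q.2) (c * d * (σ p.1 p.2 q.2 : k))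
    else 0

/-- The element `Σ_{g ∈ G} p_g # 1_F`. -/
noncomputable def cpOne {k F G : Type*} [Field k] [One F] [Fintype G] : (G × F) →₀ k :=
  ∑ g : G, Finsupp.single (g, (1 : F)) (1 : k)

/-- The value of the antipode `S` on the basis element `p_g # f`:
`S(p_g # f) = σ(g⁻¹; g ▷ f, (g ▷ f)⁻¹)⁻¹ τ(g⁻¹, g; f)⁻¹ (p_{(g ◁ f)⁻¹} # (g ▷ f)⁻¹)`;
`S` is extended `k`-linearly to the whole module. -/
noncomputable def cpS {k F G : Type*} [Field k] [Group F] [Group G]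
    (tri : G → F → F) (coa : G → F → G)
    (σ : G → F → F → kˣ) (τ : G → G → F → kˣ) (g : G) (f : F) : (G × F) →₀ k :=
  Finsupp.single ((coa g f)⁻¹, (tri g f)⁻¹)
    ((σ g⁻¹ (tri g f) (tri g f)⁻¹ : k)⁻¹ * (τ g⁻¹ g f : k)⁻¹)

lemma cpMul_single_single {k F G : Type*} [Field k] [Group F] [Group G] [DecidableEq G]
    (coa : G → F → G) (σ : G → F → F → kˣ) (p q : G × F) (c d : k) :
    cpMul coa σ (Finsupp.single p c) (Finsupp.single q d) =
      if coa p.1 p.2 = q.1 then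
        Finsupp.single (p.1, p.2 * q.2) (c * d * (σ p.1 p.2 q.2 : k)) else 0 := by
  unfold cpMul
  rw [Finsupp.sum_single_index, Finsupp.sum_single_index]
  · split <;> simp
  · rw [Finsupp.sum_single_index] <;> split <;> simp

/-- For a matched pair of groups with `G` finite, a normalized cocycle `σ` and a
normalized co-cocycle `τ` satisfying the compatibility condition, the antipode axiom
`m(S ⊗ id)Δ = uε` holds on basis elements: for all `g ∈ G`, `f ∈ F`,
`Σ_{x ∈ G} τ(g x⁻¹, x; f) S(p_{g x⁻¹} # (x ▷ f)) (p_x # f) = δ_{g,1} Σ_{y ∈ G} p_y # 1_F`. -/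
theorem crossedProduct_antipode_axiom {k : Type*} [Field k] {F : Type*} {G : Type*}
    [Group F] [Group G] [Fintype G] [DecidableEq G]
    (tri : G → F → F) (coa : G → F → G)
    (h1 : ∀ f : F, tri 1 f = f)
    (h2 : ∀ (g g' : G) (f : F), tri (g * g') f = tri g (tri g' f))
    (h3 : ∀ g : G, coa g 1 = g)
    (h4 : ∀ (g : G) (f f' : F), coa g (f * f') = coa (coa g f) f')
    (h5 : ∀ (g : G) (f f' : F), tri g (f * f') = tri g f * tri (coa g f) f')
    (h6 : ∀ (g g' : G) (f : F), coa (g * g') f = coa g (tri g' f) * coa g' f)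
    (σ : G → F → F → kˣ)
    (hσ1 : ∀ (g : G) (f : F), σ g 1 f = 1)
    (hσ2 : ∀ (g : G) (f : F), σ g f 1 = 1)
    (hσ3 : ∀ f f' : F, σ 1 f f' = 1)
    (hσ4 : ∀ (g : G) (f f' f'' : F),
      σ (coa g f) f' f'' * σ g f (f' * f'') = σ g f f' * σ g (f * f') f'')
    (τ : G → G → F → kˣ)
    (hτ1 : ∀ (g : G) (f : F), τ 1 g f = 1)
    (hτ2 : ∀ (g : G) (f : F), τ g 1 f = 1)
    (hτ3 : ∀ g g' : G, τ g g' 1 = 1)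
    (hτ4 : ∀ (g g' g'' : G) (f : F),
      τ g g' (tri g'' f) * τ (g * g') g'' f = τ g (g' * g'') f * τ g' g'' f)
    (hcomp : ∀ (g g' : G) (f f' : F),
      σ (g * g') f f' * τ g g' (f * f') =
        σ g (tri g' f) (tri (coa g' f) f') * σ g' f f' * τ g g' f *
          τ (coa g (tri g' f)) (coa g' f) f') :
    ∀ (g : G) (f : F),
      ∑ x : G, (τ (g * x⁻¹) x f : k) •
          cpMul coa σ (cpS tri coa σ τ (g * x⁻¹) (tri x f))
            (Finsupp.single (x, f) (1 : k)) =
        (if g = (1 : G) then (1 : k) else 0) • (cpOne : (G × F) →₀ k) := by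
  have tri1 : ∀ g : G, tri g 1 = 1 := fun g => by
    have := h5 g 1 1
    rw [h3, mul_one] at this
    exact left_eq_mul.mp this
  have coa1 : ∀ ψ : F, coa 1 ψ = 1 := fun ψ => by
    have := h6 1 1 ψ
    rw [one_mul, h1] at this
    exact left_eq_mul.mp this
  have triinv : ∀ (h : G) (φ : F), tri (coa h φ) φ⁻¹ = (tri h φ)⁻¹ := fun h φ => by
    have := h5 h φ φ⁻¹
    rw [mul_inv_cancel, tri1] at this
    exact (eq_inv_of_mul_eq_one_right this.symm)
  have coainvf : ∀ (h : G) (φ : F), coa (coa h φ) φ⁻¹ = h := fun h φ => by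
    have := h4 h φ φ⁻¹
    rw [mul_inv_cancel, h3] at this
    exact this.symm
  have cinv : ∀ (c : G) (ψ : F), coa c⁻¹ (tri c ψ) = (coa c ψ)⁻¹ := fun c ψ => by
    have := h6 c⁻¹ c ψ
    rw [inv_mul_cancel, coa1] at this
    exact (eq_inv_of_mul_eq_one_left this.symm)
  have key : ∀ (h : G) (φ : F), coa (coa h φ)⁻¹ (tri h φ)⁻¹ = h⁻¹ := fun h φ => by
    rw [← triinv h φ, cinv, coainvf]
  intro g f
  by_cases hg : g = 1
  · subst hg
    rw [if_pos rfl, one_smul]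
    have termval : ∀ x : G, (τ (1 * x⁻¹) x f : k) •
        cpMul coa σ (cpS tri coa σ τ (1 * x⁻¹) (tri x f)) (Finsupp.single (x, f) (1 : k)) =
        Finsupp.single (coa x f, (1 : F)) (1 : k) := by
      intro x
      have trx : tri x⁻¹ (tri x f) = f := by rw [← h2, inv_mul_cancel, h1]
      have Eσ : σ (coa x f) f⁻¹ f = σ x f f⁻¹ := by
        have := hσ4 x f f⁻¹ f
        rw [inv_mul_cancel, mul_inv_cancel, hσ2, hσ1, mul_one, mul_one] at this
        exact this
      have Eτ : τ x x⁻¹ (tri x f) = τ x⁻¹ x f := by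
        have := hτ4 x x⁻¹ x f
        rw [mul_inv_cancel, inv_mul_cancel, hτ1, hτ2, mul_one, one_mul] at this
        exact this
      rw [one_mul, cpS, cpMul_single_single]
      simp only [trx, cinv x f, inv_inv, inv_mul_cancel]
      rw [if_pos (coainvf x f), Finsupp.smul_single]
      congr 1
      have Eσ' : (σ (coa x f) f⁻¹ f : k) = (σ x f f⁻¹ : k) := congrArg Units.val Eσ
      have Eτ' : (τ x x⁻¹ (tri x f) : k) = (τ x⁻¹ x f : k) := congrArg Units.val Eτ
      rw [Eσ', Eτ']
      have ha : (τ x⁻¹ x f : k) ≠ 0 := Units.ne_zero _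
      have hb : (σ x f f⁻¹ : k) ≠ 0 := Units.ne_zero _
      field_simp
      ring
      exact mul_inv_cancel₀ ha
    rw [Finset.sum_congr rfl fun x _ => termval x, cpOne]
    exact Fintype.sum_bijective (fun x => coa x f)
      (Finite.injective_iff_bijective.mp fun a b hab => by
        have := congrArg (fun z => coa z f⁻¹) hab
        simpa [coainvf] using this)
      _ _ (fun x => rfl)
  · rw [if_neg hg, zero_smul]
    refine Finset.sum_eq_zero fun x _ => ?_
    rw [cpS, cpMul_single_single, if_neg, smul_zero]
    rw [key (g * x⁻¹) (tri x f)]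
    intro hx
    apply hg
    have : g * x⁻¹ = x⁻¹ := by rw [← inv_inv (g * x⁻¹), hx]
    exact mul_eq_right.mp this
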